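/- arXiv:2503.14123 — 2 statements merged into one kernel-verified Lean document; each statement's English description precedes it below -/
import Mathlib

section
/- Let A be a finite-dimensional normed algebra over ℂ (hence a complete normed algebra), graded by the natural numbers as A = ⊕_{d≥0} A_d with A_d · A_e ⊆ A_{d+e}, 1 ∈ A₀, each A_d a closed linear subspace, and A_d = 0 for d > n. Let X ∈ A₀ and let Y = Y₁ + ⋯ + Y_n with Y_d ∈ A_d. Then the exponential satisfies the terminating Duhamel (Volterra/Dyson) expansion exp(X + Y) = ∑_{k=0}^{n} ∫_{Δ_k} exp(s₀ X) · Y · exp(s₁ X) · Y ⋯ Y · exp(s_k X) ds₁⋯ds_k, where Δ_k = {(s₁,…,s_k) ∈ [0,1]^k : s₁ + ⋯ + s_k ≤ 1}, s₀ := 1 − (s₁ + ⋯ + s_k), and the k = 0 term is exp(X). -/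
open MeasureTheory

open NormedSpace

section Aux

variable {A : Type*} [NormedRing A] [NormedAlgebra ℝ A] [CompleteSpace A]

theorem duhamel1 (X Y : A) (t : ℝ) :
    exp (t • (X + Y)) = exp (t • X) +
      ∫ v in (0:ℝ)..t, exp (v • (X + Y)) * (Y * exp ((t - v) • X)) := by
  have hderiv : ∀ v : ℝ, HasDerivAt
      (fun v : ℝ => exp (v • (X + Y)) * exp ((t - v) • X))
      (exp (v • (X + Y)) * (Y * exp ((t - v) • X))) v := by
    intro v
    have h1 : HasDerivAt (fun v : ℝ => exp (v • (X + Y)))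
        (exp (v • (X + Y)) * (X + Y)) v := hasDerivAt_exp_smul_const (X + Y) v
    have h2 : HasDerivAt (fun v : ℝ => exp ((t - v) • X))
        ((-1 : ℝ) • (X * exp ((t - v) • X))) v := by
      have hi : HasDerivAt (fun v : ℝ => t - v) (-1) v := by
        simpa using (hasDerivAt_id v).const_sub t
      exact (hasDerivAt_exp_smul_const' X (t - v)).scomp v hi
    have := h1.mul h2
    convert this using 1
    · rfl
    simp only [neg_one_smul, mul_neg, mul_assoc]
    rw [← sub_eq_add_neg, ← mul_sub, ← sub_mul]
    congr 2
    abel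
  have hcont : Continuous fun v : ℝ => exp (v • (X + Y)) * (Y * exp ((t - v) • X)) := by
    have he : Continuous (exp : A → A) :=
      continuous_iff_continuousAt.2 fun x => (exp_analytic (𝕂 := ℝ) x).continuousAt
    fun_prop
  have := intervalIntegral.integral_eq_sub_of_hasDerivAt
    (fun v _ => hderiv v) (hcont.intervalIntegrable 0 t)
  rw [this]
  simp only [zero_smul, exp_zero, sub_zero, sub_self, mul_one, one_mul]
  abel


private def simplex (k : ℕ) : Set (Fin k → ℝ) := {s | (∀ i, 0 ≤ s i) ∧ ∑ i, s i ≤ 1}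

theorem isClosed_simplex (k : ℕ) : IsClosed (simplex k) := by
  have h1 : IsClosed {s : Fin k → ℝ | ∀ i, 0 ≤ s i} := by
    have : {s : Fin k → ℝ | ∀ i, 0 ≤ s i} = ⋂ i, {s | 0 ≤ s i} := by
      ext s; simp [Set.mem_iInter]
    rw [this]
    exact isClosed_iInter fun i => isClosed_le continuous_const (continuous_apply i)
  have h2 : IsClosed {s : Fin k → ℝ | ∑ i, s i ≤ 1} :=
    isClosed_le (by fun_prop) continuous_const
  exact h1.inter h2

theorem measurableSet_simplex (k : ℕ) : MeasurableSet (simplex k) :=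
  (isClosed_simplex k).measurableSet

theorem isCompact_simplex (k : ℕ) : IsCompact (simplex k) := by
  refine IsCompact.of_isClosed_subset (isCompact_univ_pi fun _ : Fin k => isCompact_Icc (a := (0:ℝ)) (b := 1))
    (isClosed_simplex k) ?_
  intro s hs
  refine Set.mem_univ_pi.2 fun i => ⟨hs.1 i, ?_⟩
  calc s i ≤ ∑ j, s j := Finset.single_le_sum (fun j _ => hs.1 j) (Finset.mem_univ i)
  _ ≤ 1 := hs.2

theorem contP (X Y : A) (k : ℕ) :
    Continuous fun s : Fin k → ℝ => (List.ofFn fun i => Y * exp (s i • X)).prod := by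
  have : ∀ s : Fin k → ℝ, (List.ofFn fun i => Y * exp (s i • X)).prod
      = ((List.finRange k).map fun i => Y * exp (s i • X)).prod := by
    intro s; rw [List.ofFn_eq_map]
  simp only [this]
  refine continuous_list_prod _ fun i _ => ?_
  have he : Continuous (exp : A → A) :=
      continuous_iff_continuousAt.2 fun x => (exp_analytic (𝕂 := ℝ) x).continuousAt
  fun_prop

theorem contIntegrand (X Y B : A) (k : ℕ) :
    Continuous fun s : Fin k → ℝ =>
      exp ((1 - ∑ i, s i) • B) * (List.ofFn fun i => Y * exp (s i • X)).prod := by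
  have he : Continuous (exp : A → A) :=
      continuous_iff_continuousAt.2 fun x => (exp_analytic (𝕂 := ℝ) x).continuousAt
  have := contP X Y k
  fun_prop


theorem step_aux (X Y : A) (k : ℕ)
    (hmeas : ∀ j, MeasurableSet (simplex j))
    (hcompact : ∀ j, IsCompact (simplex j))
    (hcont : ∀ (B : A) (j : ℕ), Continuous fun s : Fin j → ℝ =>
      exp ((1 - ∑ i, s i) • B) * (List.ofFn fun i => Y * exp (s i • X)).prod)
    (hPcont : ∀ j : ℕ, Continuous fun s : Fin j → ℝ =>
      (List.ofFn fun i => Y * exp (s i • X)).prod)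
    (hduh : ∀ t : ℝ, exp (t • (X + Y)) = exp (t • X) +
      ∫ v in (0:ℝ)..t, exp (v • (X + Y)) * (Y * exp ((t - v) • X))) :
    (∫ s in simplex (k+1),
        exp ((1 - ∑ i, s i) • (X + Y)) * (List.ofFn fun i => Y * exp (s i • X)).prod) =
      (∫ s in simplex k,
        exp ((1 - ∑ i, s i) • (X + Y)) * (List.ofFn fun i => Y * exp (s i • X)).prod) -
      (∫ s in simplex k,
        exp ((1 - ∑ i, s i) • X) * (List.ofFn fun i => Y * exp (s i • X)).prod) := by
  classical
  set P : (Fin k → ℝ) → A := fun s => (List.ofFn fun i => Y * exp (s i • X)).prod with hP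
  set φ : ℝ × (Fin k → ℝ) → A := fun p =>
    exp ((1 - (p.1 + ∑ i, p.2 i)) • (X + Y)) * ((Y * exp (p.1 • X)) * P p.2) with hφ
  set T : Set (ℝ × (Fin k → ℝ)) :=
    {p | (0 ≤ p.1 ∧ ∀ i, 0 ≤ p.2 i) ∧ p.1 + ∑ i, p.2 i ≤ 1} with hT
  set e : ℝ × (Fin k → ℝ) ≃ᵐ (Fin (k+1) → ℝ) :=
    (MeasurableEquiv.piFinSuccAbove (fun _ => ℝ) 0).symm with he
  have hem : MeasurePreserving e :=
    (volume_preserving_piFinSuccAbove (fun _ : Fin (k + 1) => ℝ) 0).symm _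
  have he_apply : ∀ p : ℝ × (Fin k → ℝ), e p = Fin.cons p.1 p.2 := by
    intro p
    simp [he, MeasurableEquiv.piFinSuccAbove_symm_apply, Fin.insertNthEquiv,
      Fin.insertNth_zero']
  -- step 1 : transfer to the product space
  have h1 : (∫ s in simplex (k+1),
        exp ((1 - ∑ i, s i) • (X + Y)) * (List.ofFn fun i => Y * exp (s i • X)).prod) =
      ∫ p in T, φ p := by
    rw [← hem.map_eq, setIntegral_map_equiv]
    have hset : e ⁻¹' simplex (k+1) = T := by
      ext p
      simp only [Set.mem_preimage, he_apply, simplex, Set.mem_setOf_eq, hT,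
        Fin.sum_cons, Fin.forall_fin_succ, Fin.cons_zero, Fin.cons_succ]
    rw [hset]
    refine setIntegral_congr_fun (hset ▸ (hmeas (k+1)).preimage e.measurable) fun p _ => ?_
    rw [he_apply]
    simp only [hφ, Fin.sum_cons, List.ofFn_succ, Fin.cons_zero, Fin.cons_succ, List.prod_cons]
    rfl
  rw [h1]
  -- step 2 : compactness / integrability
  have hTclosed : IsClosed T := by
    have h1 : IsClosed {p : ℝ × (Fin k → ℝ) | 0 ≤ p.1} :=
      isClosed_le continuous_const continuous_fst
    have h2 : IsClosed {p : ℝ × (Fin k → ℝ) | ∀ i, 0 ≤ p.2 i} := by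
      have : {p : ℝ × (Fin k → ℝ) | ∀ i, 0 ≤ p.2 i} = ⋂ i, {p | 0 ≤ p.2 i} := by
        ext p; simp [Set.mem_iInter]
      rw [this]
      exact isClosed_iInter fun i =>
        isClosed_le continuous_const ((continuous_apply i).comp continuous_snd)
    have h3 : IsClosed {p : ℝ × (Fin k → ℝ) | p.1 + ∑ i, p.2 i ≤ 1} := by
      refine isClosed_le ?_ continuous_const
      fun_prop
    exact (h1.inter h2).inter h3
  have hTmeas : MeasurableSet T := hTclosed.measurableSet
  have hTcompact : IsCompact T := by
    refine IsCompact.of_isClosed_subset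
      ((isCompact_Icc (a := (0:ℝ)) (b := 1)).prod (hcompact k)) hTclosed ?_
    rintro ⟨v, s⟩ ⟨⟨hv, hs⟩, hsum⟩
    have hσ : 0 ≤ ∑ i, s i := Finset.sum_nonneg fun i _ => hs i
    exact ⟨⟨hv, by linarith⟩, ⟨hs, by linarith⟩⟩
  have hφcont : Continuous φ := by
    have he' : Continuous (exp : A → A) :=
      continuous_iff_continuousAt.2 fun x => (exp_analytic (𝕂 := ℝ) x).continuousAt
    have hPc : Continuous P := hPcont k
    fun_prop
  have hφint : IntegrableOn φ T := hφcont.continuousOn.integrableOn_compact hTcompact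
  have hind : Integrable (T.indicator φ) := (integrable_indicator_iff hTmeas).2 hφint
  rw [← integral_indicator hTmeas]
  rw [Measure.volume_eq_prod, integral_prod_symm _ (by rwa [← Measure.volume_eq_prod])]
  -- the inner integral
  have hinner : ∀ s : Fin k → ℝ, (∫ v, T.indicator φ (v, s)) =
      (simplex k).indicator (fun s =>
        (exp ((1 - ∑ i, s i) • (X + Y)) - exp ((1 - ∑ i, s i) • X)) * P s) s := by
    intro s
    by_cases hs : s ∈ simplex k
    · rw [Set.indicator_of_mem hs]
      set t : ℝ := 1 - ∑ i, s i with hdeft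
      have ht : 0 ≤ t := by have := hs.2; simp only [hdeft]; linarith
      have hptw : ∀ v : ℝ, T.indicator φ (v, s) =
          (Set.Icc 0 t).indicator (fun v => φ (v, s)) v := by
        intro v
        by_cases hv : v ∈ Set.Icc (0:ℝ) t
        · rw [Set.indicator_of_mem hv,
            Set.indicator_of_mem (show (v, s) ∈ T from ⟨⟨hv.1, hs.1⟩, by
              have := hv.2; simp only [hdeft] at this; linarith⟩)]
        · rw [Set.indicator_of_notMem hv, Set.indicator_of_notMem ?_]
          intro hmem
          exact hv ⟨hmem.1.1, by have := hmem.2; simp only [hdeft]; linarith⟩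
      simp only [hptw]
      rw [integral_indicator measurableSet_Icc, integral_Icc_eq_integral_Ioc,
        ← intervalIntegral.integral_of_le ht]
      have hφeq : ∀ v : ℝ, φ (v, s) =
          (exp ((t - v) • (X + Y)) * (Y * exp (v • X))) * P s := by
        intro v
        simp only [hφ, ← mul_assoc]
        congr 3
        simp only [hdeft]; ring
      simp only [hφeq]
      -- pull `P s` out of the interval integral
      have hLc : Continuous fun v : ℝ => exp ((t - v) • (X + Y)) * (Y * exp (v • X)) := by
        have he' : Continuous (exp : A → A) :=
      continuous_iff_continuousAt.2 fun x => (exp_analytic (𝕂 := ℝ) x).continuousAt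
        fun_prop
      have hpull := ((ContinuousLinearMap.mul ℝ A).flip (P s)).intervalIntegral_comp_comm
        (μ := volume) (a := 0) (b := t)
        (f := fun v => exp ((t - v) • (X + Y)) * (Y * exp (v • X)))
        (hLc.intervalIntegrable 0 t)
      simp only [ContinuousLinearMap.flip_apply, ContinuousLinearMap.mul_apply'] at hpull
      rw [hpull]
      -- reflect the integration variable
      have hrefl : (∫ v in (0:ℝ)..t, exp ((t - v) • (X + Y)) * (Y * exp (v • X))) =
          ∫ v in (0:ℝ)..t, exp (v • (X + Y)) * (Y * exp ((t - v) • X)) := by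
        have hfun : (fun v : ℝ => exp ((t - v) • (X + Y)) * (Y * exp (v • X))) =
            fun v : ℝ => (fun w : ℝ => exp (w • (X + Y)) * (Y * exp ((t - w) • X))) (t - v) := by
          funext v
          simp only [sub_sub_cancel]
        rw [hfun, intervalIntegral.integral_comp_sub_left
          (fun w : ℝ => exp (w • (X + Y)) * (Y * exp ((t - w) • X))) t, sub_self, sub_zero]
      rw [hrefl]
      congr 1
      have := hduh t
      rw [this]
      abel
    · rw [Set.indicator_of_notMem hs]
      have : ∀ v : ℝ, T.indicator φ (v, s) = 0 := by
        intro v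
        refine Set.indicator_of_notMem ?_ φ
        rintro ⟨⟨hv, hsi⟩, hsum⟩
        exact hs ⟨hsi, by linarith⟩
      simp only [this, integral_zero]
  simp only [hinner]
  rw [integral_indicator (hmeas k)]
  -- split the integral
  have hsub : ∀ s : Fin k → ℝ,
      (exp ((1 - ∑ i, s i) • (X + Y)) - exp ((1 - ∑ i, s i) • X)) * P s =
        exp ((1 - ∑ i, s i) • (X + Y)) * P s - exp ((1 - ∑ i, s i) • X) * P s :=
    fun s => sub_mul _ _ _
  simp only [hsub]
  exact integral_sub ((hcont (X + Y) k).continuousOn.integrableOn_compact (hcompact k))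
    ((hcont X k).continuousOn.integrableOn_compact (hcompact k))


theorem exp_mem_closed {A : Type*} [NormedRing A] [NormedAlgebra ℂ A] [CompleteSpace A]
    (p : Submodule ℂ A) (hp : IsClosed (p : Set A)) (h1 : (1 : A) ∈ p)
    (hmul : ∀ a b : A, a ∈ p → b ∈ p → a * b ∈ p) (x : A) (hx : x ∈ p) :
    exp x ∈ p := by
  have hpow : ∀ m : ℕ, x ^ m ∈ p := by
    intro m; induction m with
    | zero => simpa using h1
    | succ m ih => rw [pow_succ]; exact hmul _ _ ih hx
  have hsummable : Summable fun m : ℕ => ((m.factorial : ℝ)⁻¹) • x ^ m :=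
    expSeries_summable' (𝕂 := ℝ) x
  have htend := hsummable.hasSum.tendsto_sum_nat
  rw [exp_eq_tsum (𝕂 := ℝ)]
  refine hp.mem_of_tendsto htend (Filter.Eventually.of_forall fun N => ?_)
  refine Submodule.sum_mem p fun m _ => ?_
  have : ((m.factorial : ℝ)⁻¹) • x ^ m = ((m.factorial : ℂ)⁻¹) • x ^ m := by
    rw [← Complex.coe_smul]; norm_num
  rw [this]
  exact Submodule.smul_mem p _ (hpow m)

variable {A : Type*} [NormedRing A] [NormedAlgebra ℂ A]
  (𝒜 : ℕ → Submodule ℂ A) [GradedRing 𝒜]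

/-- the filtration -/
noncomputable def Filt (j : ℕ) : Submodule ℂ A := ⨆ d, ⨆ _ : j ≤ d, 𝒜 d

theorem grade_le_Filt {j d : ℕ} (h : j ≤ d) : 𝒜 d ≤ Filt 𝒜 j :=
  le_iSup_of_le d (le_iSup_of_le h le_rfl)

theorem Filt_mul {i j : ℕ} {a b : A} (ha : a ∈ Filt 𝒜 i) (hb : b ∈ Filt 𝒜 j) :
    a * b ∈ Filt 𝒜 (i + j) := by
  have : Filt 𝒜 i * Filt 𝒜 j ≤ Filt 𝒜 (i + j) := by
    rw [Filt, Filt, Submodule.iSup_mul]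
    refine iSup_le fun d => ?_
    rw [Submodule.iSup_mul]
    refine iSup_le fun hd => ?_
    rw [Submodule.mul_iSup]
    refine iSup_le fun e => ?_
    rw [Submodule.mul_iSup]
    refine iSup_le fun he => ?_
    refine le_trans (Submodule.mul_le.2 fun p hp q hq => ?_) (grade_le_Filt 𝒜 (add_le_add hd he))
    exact SetLike.mul_mem_graded hp hq
  exact this (Submodule.mul_mem_mul ha hb)

theorem Filt_eq_bot {n : ℕ} (hvan : ∀ d, n < d → 𝒜 d = ⊥) : Filt 𝒜 (n + 1) = ⊥ := by
  refine le_bot_iff.1 (iSup_le fun d => iSup_le fun hd => ?_)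
  rw [hvan d hd]


end Aux

/-- Terminating Duhamel (Volterra/Dyson) expansion in a finite-dimensional normed
`ℂ`-algebra graded by `ℕ` and vanishing above degree `n`: for `X` of degree `0` and
`Y = Y₁ + ⋯ + Y_n` with `Y_d` of degree `d`,
`exp(X+Y) = ∑_{k=0}^{n} ∫_{Δ_k} e^{s₀X} Y e^{s₁X} Y ⋯ Y e^{s_kX} ds₁⋯ds_k`,
where `Δ_k = {s ∈ [0,1]^k : s₁ + ⋯ + s_k ≤ 1}` and `s₀ = 1 - (s₁ + ⋯ + s_k)`. -/
theorem stmt_2 {A : Type*} [NormedRing A] [NormedAlgebra ℂ A]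
    [FiniteDimensional ℂ A] [CompleteSpace A]
    (𝒜 : ℕ → Submodule ℂ A) [GradedRing 𝒜]
    (hclosed : ∀ d, IsClosed (𝒜 d : Set A))
    (n : ℕ) (hvan : ∀ d, n < d → 𝒜 d = ⊥)
    (X : A) (hX : X ∈ 𝒜 0)
    (Yc : ℕ → A) (hYc : ∀ d, 1 ≤ d → d ≤ n → Yc d ∈ 𝒜 d) :
    NormedSpace.exp (X + ∑ d ∈ Finset.Icc 1 n, Yc d) =
      ∑ k ∈ Finset.range (n + 1),
        ∫ s in {s : Fin k → ℝ | (∀ i, 0 ≤ s i) ∧ ∑ i, s i ≤ 1},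
          NormedSpace.exp ((1 - ∑ i, s i) • X) *
            (List.ofFn fun i : Fin k =>
              (∑ d ∈ Finset.Icc 1 n, Yc d) * NormedSpace.exp (s i • X)).prod := by
  classical
  set Y : A := ∑ d ∈ Finset.Icc 1 n, Yc d with hYdef
  -- membership facts
  have hexpmem : ∀ r : ℝ, exp (r • X) ∈ 𝒜 0 := by
    intro r
    refine exp_mem_closed (𝒜 0) (hclosed 0) (SetLike.one_mem_graded 𝒜)
      (fun a b ha hb => by simpa using SetLike.mul_mem_graded ha hb) _ ?_
    have : r • X = (r : ℂ) • X := (Complex.coe_smul r X).symm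
    rw [this]
    exact Submodule.smul_mem _ _ hX
  have hYmem : Y ∈ Filt 𝒜 1 := by
    refine Submodule.sum_mem _ fun d hd => ?_
    rw [Finset.mem_Icc] at hd
    exact grade_le_Filt 𝒜 hd.1 (hYc d hd.1 hd.2)
  have hProd : ∀ (k : ℕ) (s : Fin k → ℝ),
      (List.ofFn fun i => Y * exp (s i • X)).prod ∈ Filt 𝒜 k := by
    intro k
    induction k with
    | zero =>
      intro s
      simp only [List.ofFn_zero, List.prod_nil]
      exact grade_le_Filt 𝒜 le_rfl (SetLike.one_mem_graded 𝒜)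
    | succ k ih =>
      intro s
      rw [List.ofFn_succ, List.prod_cons]
      have h1 : Y * exp (s 0 • X) ∈ Filt 𝒜 1 := by
        have := Filt_mul 𝒜 hYmem (grade_le_Filt 𝒜 le_rfl (hexpmem (s 0)))
        simpa using this
      have h2 := Filt_mul 𝒜 h1 (ih fun i => s i.succ)
      rwa [add_comm] at h2
  -- continuity inputs
  have hPcont := contP X Y
  have hcontI := contIntegrand X Y
  have hduh := duhamel1 X Y
  -- the Duhamel iteration
  have key : ∀ k : ℕ,
      exp (X + Y) =
        (∑ j ∈ Finset.range k, ∫ s in simplex j,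
          exp ((1 - ∑ i, s i) • X) * (List.ofFn fun i => Y * exp (s i • X)).prod) +
        ∫ s in simplex k,
          exp ((1 - ∑ i, s i) • (X + Y)) * (List.ofFn fun i => Y * exp (s i • X)).prod := by
    intro k
    induction k with
    | zero =>
      rw [Finset.sum_range_zero, zero_add]
      have hset : simplex 0 = Set.univ := by
        ext s
        simp [simplex]
      rw [hset, setIntegral_univ]
      have : ∀ s : Fin 0 → ℝ,
          exp ((1 - ∑ i, s i) • (X + Y)) * (List.ofFn fun i => Y * exp (s i • X)).prod
            = exp (X + Y) := by
        intro s
        simp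
      simp only [this]
      rw [integral_const]
      have hvol : (volume : Measure (Fin 0 → ℝ)) Set.univ = 1 := by
        rw [volume_pi, Measure.pi_univ]
        simp
      rw [Measure.real, hvol]
      simp
    | succ k ih =>
      rw [ih, Finset.sum_range_succ,
        step_aux X Y k measurableSet_simplex isCompact_simplex hcontI hPcont hduh]
      abel
  have hzero : (∫ s in simplex (n+1),
      exp ((1 - ∑ i, s i) • (X + Y)) * (List.ofFn fun i => Y * exp (s i • X)).prod) = 0 := by
    have : ∀ s : Fin (n+1) → ℝ,
        exp ((1 - ∑ i, s i) • (X + Y)) * (List.ofFn fun i => Y * exp (s i • X)).prod = 0 := by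
      intro s
      have hmem := hProd (n+1) s
      rw [Filt_eq_bot 𝒜 hvan, Submodule.mem_bot] at hmem
      rw [hmem, mul_zero]
    simp only [this, integral_zero]
  rw [key (n+1), hzero, add_zero]
  rfl
end

section
/- Let a be a positive real number, let l be a natural number, and let 0 < ρ < a. Then, for the positively oriented circle of radius ρ centered at a, (2πi)⁻¹ ∮_{|z−a|=ρ} z^{−1/2} · (a − z)^{−(l+1)} dz = −((2l)! / (4^l · (l!)²)) · a^{−1/2−l}, where z^{−1/2} denotes the principal branch of the complex power (holomorphic on ℂ ∖ (−∞, 0]) and (a − z)^{−(l+1)} means ((a − z)^{l+1})⁻¹. -/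
open Complex

private lemma prod_half (l : ℕ) :
    (∏ k ∈ Finset.range l, (-(1 / 2 : ℂ) - k)) =
      (-1) ^ l * ((2 * l).factorial : ℂ) / (4 ^ l * (l.factorial : ℂ)) := by
  induction l with
  | zero => simp
  | succ n ih =>
      rw [Finset.prod_range_succ, ih]
      have h4 : (4 : ℂ) ^ n ≠ 0 := by norm_num
      have hf : ((n.factorial : ℂ)) ≠ 0 := Nat.cast_ne_zero.mpr n.factorial_ne_zero
      have h2 : 2 * (n + 1) = (2 * n) + 1 + 1 := by ring
      rw [h2, Nat.factorial_succ ((2 * n) + 1), Nat.factorial_succ (2 * n),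
        Nat.factorial_succ n]
      have hn1 : ((n : ℂ) + 1) ≠ 0 := by
        have h := Nat.cast_ne_zero (R := ℂ).mpr (Nat.succ_ne_zero n)
        push_cast at h
        exact h
      push_cast
      field_simp
      ring

private lemma iter_cpow (l : ℕ) :
    ∀ z : ℂ, 0 < z.re →
      iteratedDeriv l (fun w : ℂ => w ^ (-(1 / 2) : ℂ)) z =
        (∏ k ∈ Finset.range l, (-(1 / 2 : ℂ) - k)) * z ^ (-(1 / 2 : ℂ) - l) := by
  induction l with
  | zero => intro z _; simp
  | succ n ih =>
      intro z hz
      rw [iteratedDeriv_succ]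
      have hopen : IsOpen {w : ℂ | 0 < w.re} := isOpen_lt continuous_const continuous_re
      have hmem : {w : ℂ | 0 < w.re} ∈ nhds z := hopen.mem_nhds hz
      have heq : iteratedDeriv n (fun w : ℂ => w ^ (-(1 / 2) : ℂ)) =ᶠ[nhds z]
          fun w => (∏ k ∈ Finset.range n, (-(1 / 2 : ℂ) - k)) * w ^ (-(1 / 2 : ℂ) - n) := by
        filter_upwards [hmem] with w hw
        exact ih w hw
      rw [heq.deriv_eq]
      have hslit : z ∈ slitPlane := Or.inl hz
      have hd : HasDerivAt (fun w : ℂ => w ^ (-(1 / 2 : ℂ) - n))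
          ((-(1 / 2 : ℂ) - n) * z ^ ((-(1 / 2 : ℂ) - n) - 1) * 1) z :=
        (hasDerivAt_id z).cpow_const hslit
      rw [(hd.const_mul (∏ k ∈ Finset.range n, (-(1 / 2 : ℂ) - k))).deriv,
        Finset.prod_range_succ]
      have hexp : (-(1 / 2 : ℂ) - n) - 1 = -(1 / 2 : ℂ) - ((n + 1 : ℕ) : ℂ) := by
        push_cast; ring
      rw [hexp]
      ring

/-- Cauchy-formula evaluation of the contour integral underlying the resolvent
symbols of `√Δ`: for `0 < ρ < a`,
`(2πi)⁻¹ ∮_{|z-a|=ρ} z^{-1/2} (a - z)^{-(l+1)} dz = -((2l)!/(4^l (l!)²)) a^{-1/2-l}`. -/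
theorem stmt_10 (a : ℝ) (ha : 0 < a) (l : ℕ) (ρ : ℝ) (hρ : 0 < ρ) (hρa : ρ < a) :
    (2 * (Real.pi : ℂ) * Complex.I)⁻¹ *
        (∮ z in C((a : ℂ), ρ), z ^ (-(1 / 2) : ℂ) * (((a : ℂ) - z) ^ (l + 1))⁻¹) =
      -(((2 * l).factorial : ℂ) / (4 ^ l * ((l.factorial : ℂ)) ^ 2)) *
        (a : ℂ) ^ (-(1 / 2) - (l : ℂ)) := by
  set f : ℂ → ℂ := fun w => w ^ (-(1 / 2) : ℂ) with hf
  have hre : ∀ z ∈ Metric.closedBall (a : ℂ) ρ, 0 < z.re := by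
    intro z hz
    rw [Metric.mem_closedBall, Complex.dist_eq] at hz
    have h1 : |(z - (a : ℂ)).re| ≤ ‖z - a‖ := Complex.abs_re_le_norm _
    have h2 : (z - (a : ℂ)).re = z.re - a := by simp
    rw [h2] at h1
    have := abs_le.1 (h1.trans hz)
    linarith [this.1]
  have hdiff : DifferentiableOn ℂ f (Metric.closedBall (a : ℂ) ρ) := by
    intro z hz
    exact (((hasDerivAt_id z).cpow_const (Or.inl (hre z hz))).differentiableAt).differentiableWithinAt
  lift ρ to NNReal using hρ.le with R hR
  have hR0 : 0 < R := by exact_mod_cast hρ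
  have hball : HasFPowerSeriesOnBall f (cauchyPowerSeries f (a : ℂ) R) (a : ℂ) R :=
    hdiff.hasFPowerSeriesOnBall hR0
  have hcoeff := hball.factorial_smul (1 : ℂ) l
  have hfd : iteratedFDeriv ℂ l f (a : ℂ) (fun _ => (1 : ℂ)) = iteratedDeriv l f (a : ℂ) :=
    (iteratedDeriv_eq_iteratedFDeriv).symm
  rw [hfd] at hcoeff
  have hiter : iteratedDeriv l f (a : ℂ) =
      (∏ k ∈ Finset.range l, (-(1 / 2 : ℂ) - k)) * (a : ℂ) ^ (-(1 / 2 : ℂ) - l) :=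
    iter_cpow l (a : ℂ) (by simpa using ha)
  have hcp : (cauchyPowerSeries f (a : ℂ) R l) (fun _ => (1 : ℂ)) =
      (2 * (Real.pi : ℂ) * Complex.I)⁻¹ *
        ∮ z in C((a : ℂ), (R : ℝ)), (z - a)⁻¹ ^ l • (z - a)⁻¹ • f z := by
    simp [cauchyPowerSeries, ContinuousMultilinearMap.mkPiRing_apply, smul_eq_mul]
  -- relate the two integrands
  have hfun : ∀ z : ℂ, z ^ (-(1 / 2) : ℂ) * (((a : ℂ) - z) ^ (l + 1))⁻¹ =
      (-1 : ℂ) ^ (l + 1) • ((z - a)⁻¹ ^ l • (z - a)⁻¹ • f z) := by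
    intro z
    have h0 : ((a : ℂ) - z) = (-1) * (z - a) := by ring
    have h1 : ((a : ℂ) - z) ^ (l + 1) = (-1) ^ (l + 1) * (z - a) ^ (l + 1) := by
      rw [h0, mul_pow]
    have h2 : (z - (a : ℂ))⁻¹ ^ l * (z - a)⁻¹ = ((z - a) ^ (l + 1))⁻¹ := by
      rw [inv_pow, pow_succ, mul_inv]
    have h3 : ((-1 : ℂ) ^ (l + 1))⁻¹ = (-1 : ℂ) ^ (l + 1) := by
      rcases Nat.even_or_odd (l + 1) with h | h
      · rw [h.neg_one_pow]; norm_num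
      · rw [h.neg_one_pow]; norm_num
    simp only [smul_eq_mul, hf]
    rw [h1, mul_inv, h3, ← h2]
    ring
  have hint : (∮ z in C((a : ℂ), (R : ℝ)), z ^ (-(1 / 2) : ℂ) * (((a : ℂ) - z) ^ (l + 1))⁻¹) =
      (-1 : ℂ) ^ (l + 1) •
        ∮ z in C((a : ℂ), (R : ℝ)), (z - a)⁻¹ ^ l • (z - a)⁻¹ • f z := by
    rw [← circleIntegral.integral_smul]
    exact circleIntegral.integral_congr R.coe_nonneg fun z _ => hfun z
  have hp : (cauchyPowerSeries f (a : ℂ) R l) (fun _ => (1 : ℂ)) =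
      iteratedDeriv l f (a : ℂ) / (l.factorial : ℂ) := by
    have hfl : ((l.factorial : ℂ)) ≠ 0 := Nat.cast_ne_zero.mpr l.factorial_ne_zero
    rw [← hcoeff, nsmul_eq_mul, mul_div_cancel_left₀ _ hfl]
  rw [hint, smul_eq_mul, ← mul_assoc, mul_comm ((2 * (Real.pi : ℂ) * Complex.I)⁻¹),
    mul_assoc, ← hcp, hp, hiter, prod_half]
  have hsgn : (-1 : ℂ) ^ (l + 1) * (-1 : ℂ) ^ l = -1 := by
    rw [← pow_add]
    exact Odd.neg_one_pow ⟨l, by ring⟩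
  have h4 : (4 : ℂ) ^ l ≠ 0 := by norm_num
  have hfl : ((l.factorial : ℂ)) ≠ 0 := Nat.cast_ne_zero.mpr l.factorial_ne_zero
  have hexp : (-(1 / 2 : ℂ) - (l : ℕ)) = (-(1 / 2) - (l : ℂ)) := by push_cast; ring
  rw [hexp]
  field_simp
  ring_nf
  simp only [pow_mul]
  rw [← pow_mul, mul_comm l 2, pow_mul, neg_one_sq, one_pow, mul_one]
end
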